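/- The supremum over C¹ perturbations equals the supremum over bounded measurable perturbations in the random-walk rate function: sup over a ∈ C¹([0,T]) of F(a) = sup over bounded Borel measurable a: [0,T] → ℝ of F(a), where F(a) := ∫₀ᵀ ( a(t)x'(t) − w⁺(t)(e^{a(t)} − 1) − w⁻(t)(e^{−a(t)} − 1) ) dt. -/

import Mathlib

open MeasureTheory

noncomputable section

/-- `F(a) = ∫₀ᵀ ( a(t)x'(t) − w⁺(t)(e^{a(t)} − 1) − w⁻(t)(e^{−a(t)} − 1) ) dt`. -/
def Frate (T : ℝ) (x' wp wm : ℝ → ℝ) (a : ℝ → ℝ) : ℝ :=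
  ∫ t in Set.Ioc 0 T,
    (a t * x' t - wp t * (Real.exp (a t) - 1) - wm t * (Real.exp (-a t) - 1))

/-- Lipschitz bound for `exp` on `[-B, B]`. -/
lemma exp_lipschitz_of_abs_le {B s t : ℝ} (hs : |s| ≤ B) (ht : |t| ≤ B) :
    |Real.exp s - Real.exp t| ≤ Real.exp B * |s - t| := by
  wlog h : t ≤ s generalizing s t
  · rw [abs_sub_comm, abs_sub_comm s t]; exact this ht hs (le_of_not_ge h)
  have hsB : s ≤ B := le_trans (le_abs_self s) hs
  have e1 : Real.exp t = Real.exp s * Real.exp (t - s) := by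
    rw [← Real.exp_add]; ring_nf
  have e2 : 1 + (t - s) ≤ Real.exp (t - s) := by
    simpa [add_comm] using Real.add_one_le_exp (t - s)
  have e3 : Real.exp s ≤ Real.exp B := Real.exp_le_exp.2 hsB
  have e4 : Real.exp t ≤ Real.exp s := Real.exp_le_exp.2 h
  rw [abs_of_nonneg (by linarith), abs_of_nonneg (by linarith)]
  nlinarith [Real.exp_pos s]

/-- Polynomials are `C¹`. -/
lemma contDiff_one_polynomial (p : Polynomial ℝ) :
    ContDiff ℝ 1 fun x : ℝ => p.eval x := by
  rw [contDiff_one_iff_deriv]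
  refine ⟨fun x => (p.hasDerivAt x).differentiableAt, ?_⟩
  have : deriv (fun x : ℝ => p.eval x) = fun x => p.derivative.eval x := by
    funext x; exact p.deriv
  rw [this]
  exact p.derivative.continuous

/-- The clamp map `u ↦ max (-K) (min u K)` is 1-Lipschitz. -/
lemma clamp_lipschitz (K u v : ℝ) :
    |max (-K) (min u K) - max (-K) (min v K)| ≤ |u - v| := by
  rw [max_comm (-K) (min u K), max_comm (-K) (min v K)]
  refine (abs_max_sub_max_le_abs _ _ _).trans ?_
  refine (abs_min_sub_min_le_max u K v K).trans ?_
  simp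

lemma Frate_integrand_integrable (T M B : ℝ) (hM : 0 < M)
    (x' wp wm f : ℝ → ℝ)
    (hx'int : IntegrableOn x' (Set.Ioc 0 T))
    (hwpmeas : Measurable wp) (hwmmeas : Measurable wm)
    (hwp : ∀ t, wp t ∈ Set.Icc (0:ℝ) M) (hwm : ∀ t, wm t ∈ Set.Icc (0:ℝ) M)
    (hf : AEStronglyMeasurable f (volume.restrict (Set.Ioc 0 T)))
    (hfB : ∀ t ∈ Set.Ioc 0 T, |f t| ≤ B) :
    IntegrableOn
      (fun t => f t * x' t - wp t * (Real.exp (f t) - 1) - wm t * (Real.exp (-f t) - 1))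
      (Set.Ioc 0 T) := by
  have hfin : volume (Set.Ioc (0:ℝ) T) < ⊤ := by
    rw [Real.volume_Ioc]; exact ENNReal.ofReal_lt_top
  have h1 : IntegrableOn (fun t => f t * x' t) (Set.Ioc 0 T) := by
    refine Integrable.mono' (hx'int.abs.const_mul B) (hf.mul hx'int.1) ?_
    refine (ae_restrict_iff' measurableSet_Ioc).2 (ae_of_all _ fun t ht => ?_)
    rw [Real.norm_eq_abs, abs_mul]
    exact mul_le_mul_of_nonneg_right (hfB t ht) (abs_nonneg _)
  have hexp : ∀ s : ℝ, |s| ≤ B → |Real.exp s - 1| ≤ Real.exp B + 1 := by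
    intro s hs
    have h1 : Real.exp s ≤ Real.exp B := Real.exp_le_exp.2 (le_trans (le_abs_self _) hs)
    have h2 : 0 < Real.exp s := Real.exp_pos s
    rw [abs_le]; constructor <;> nlinarith
  have h2 : IntegrableOn (fun t => wp t * (Real.exp (f t) - 1)) (Set.Ioc 0 T) := by
    refine Integrable.mono' (integrableOn_const (C := M * (Real.exp B + 1)) hfin.ne)
      (hwpmeas.aestronglyMeasurable.mul
        ((Real.continuous_exp.comp_aestronglyMeasurable hf).sub aestronglyMeasurable_const)) ?_
    refine (ae_restrict_iff' measurableSet_Ioc).2 (ae_of_all _ fun t ht => ?_)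
    rw [Real.norm_eq_abs, abs_mul, abs_of_nonneg (hwp t).1]
    exact mul_le_mul (hwp t).2 (hexp _ (hfB t ht)) (abs_nonneg _) hM.le
  have h3 : IntegrableOn (fun t => wm t * (Real.exp (-f t) - 1)) (Set.Ioc 0 T) := by
    refine Integrable.mono' (integrableOn_const (C := M * (Real.exp B + 1)) hfin.ne)
      (hwmmeas.aestronglyMeasurable.mul
        ((Real.continuous_exp.comp_aestronglyMeasurable hf.neg).sub aestronglyMeasurable_const)) ?_
    refine (ae_restrict_iff' measurableSet_Ioc).2 (ae_of_all _ fun t ht => ?_)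
    rw [Real.norm_eq_abs, abs_mul, abs_of_nonneg (hwm t).1]
    refine mul_le_mul (hwm t).2 (hexp _ ?_) (abs_nonneg _) hM.le
    rw [abs_neg]; exact hfB t ht
  exact (h1.sub h2).sub h3

lemma Frate_diff_bound (T M B : ℝ) (hM : 0 < M) (hB : 0 ≤ B)
    (x' wp wm f g : ℝ → ℝ)
    (hx'int : IntegrableOn x' (Set.Ioc 0 T))
    (hwpmeas : Measurable wp) (hwmmeas : Measurable wm)
    (hwp : ∀ t, wp t ∈ Set.Icc (0:ℝ) M) (hwm : ∀ t, wm t ∈ Set.Icc (0:ℝ) M)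
    (hf : AEStronglyMeasurable f (volume.restrict (Set.Ioc 0 T)))
    (hg : AEStronglyMeasurable g (volume.restrict (Set.Ioc 0 T)))
    (hfB : ∀ t ∈ Set.Ioc 0 T, |f t| ≤ B) (hgB : ∀ t ∈ Set.Ioc 0 T, |g t| ≤ B) :
    |Frate T x' wp wm f - Frate T x' wp wm g| ≤
      ∫ t in Set.Ioc 0 T, |f t - g t| * (|x' t| + 2 * M * Real.exp B) := by
  have hfin : volume (Set.Ioc (0:ℝ) T) < ⊤ := by
    rw [Real.volume_Ioc]; exact ENNReal.ofReal_lt_top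
  have hif := Frate_integrand_integrable T M B hM x' wp wm f hx'int hwpmeas hwmmeas hwp hwm hf hfB
  have hig := Frate_integrand_integrable T M B hM x' wp wm g hx'int hwpmeas hwmmeas hwp hwm hg hgB
  set If : ℝ → ℝ := fun t => f t * x' t - wp t * (Real.exp (f t) - 1) - wm t * (Real.exp (-f t) - 1) with hIf
  set Ig : ℝ → ℝ := fun t => g t * x' t - wp t * (Real.exp (g t) - 1) - wm t * (Real.exp (-g t) - 1) with hIg
  have key : Frate T x' wp wm f - Frate T x' wp wm g = ∫ t in Set.Ioc 0 T, (If t - Ig t) := by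
    rw [Frate, Frate, integral_sub hif hig]
  rw [key]
  have step1 : |∫ t in Set.Ioc 0 T, (If t - Ig t)| ≤ ∫ t in Set.Ioc 0 T, |If t - Ig t| := by
    simpa [Real.norm_eq_abs] using
      norm_integral_le_integral_norm (μ := volume.restrict (Set.Ioc 0 T))
        (f := fun t => If t - Ig t)
  refine step1.trans ?_
  -- pointwise bound
  have hpt : ∀ t ∈ Set.Ioc 0 T,
      |If t - Ig t| ≤ |f t - g t| * (|x' t| + 2 * M * Real.exp B) := by
    intro t ht
    have e : If t - Ig t = (f t - g t) * x' t - wp t * (Real.exp (f t) - Real.exp (g t))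
        - wm t * (Real.exp (-f t) - Real.exp (-g t)) := by
      simp only [hIf, hIg]; ring
    have t1 : |(f t - g t) * x' t| = |f t - g t| * |x' t| := abs_mul _ _
    have t2 : |wp t * (Real.exp (f t) - Real.exp (g t))| ≤ M * (Real.exp B * |f t - g t|) := by
      rw [abs_mul, abs_of_nonneg (hwp t).1]
      exact mul_le_mul (hwp t).2 (exp_lipschitz_of_abs_le (hfB t ht) (hgB t ht))
        (abs_nonneg _) hM.le
    have t3 : |wm t * (Real.exp (-f t) - Real.exp (-g t))| ≤ M * (Real.exp B * |f t - g t|) := by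
      rw [abs_mul, abs_of_nonneg (hwm t).1]
      have hl := exp_lipschitz_of_abs_le (B := B) (s := -f t) (t := -g t)
        (by rw [abs_neg]; exact hfB t ht) (by rw [abs_neg]; exact hgB t ht)
      have : |(-f t) - (-g t)| = |f t - g t| := by
        rw [show (-f t) - (-g t) = -(f t - g t) by ring, abs_neg]
      rw [this] at hl
      exact mul_le_mul (hwm t).2 hl (abs_nonneg _) hM.le
    have habs : |If t - Ig t| ≤ |(f t - g t) * x' t|
        + |wp t * (Real.exp (f t) - Real.exp (g t))|
        + |wm t * (Real.exp (-f t) - Real.exp (-g t))| := by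
      rw [e]
      calc |(f t - g t) * x' t - wp t * (Real.exp (f t) - Real.exp (g t))
            - wm t * (Real.exp (-f t) - Real.exp (-g t))|
          ≤ |(f t - g t) * x' t - wp t * (Real.exp (f t) - Real.exp (g t))|
            + |wm t * (Real.exp (-f t) - Real.exp (-g t))| := abs_sub _ _
        _ ≤ |(f t - g t) * x' t| + |wp t * (Real.exp (f t) - Real.exp (g t))|
            + |wm t * (Real.exp (-f t) - Real.exp (-g t))| :=
            add_le_add (abs_sub _ _) le_rfl
    nlinarith [habs, t2, t3, abs_nonneg (f t - g t), abs_nonneg (x' t)]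
  -- integrability of both sides
  have hint1 : IntegrableOn (fun t => |If t - Ig t|) (Set.Ioc 0 T) := (hif.sub hig).abs
  have hint2 : IntegrableOn (fun t => |f t - g t| * (|x' t| + 2 * M * Real.exp B))
      (Set.Ioc 0 T) := by
    have hdom : IntegrableOn (fun t => 2 * B * (|x' t| + 2 * M * Real.exp B))
        (Set.Ioc 0 T) :=
      (hx'int.abs.add (integrableOn_const hfin.ne)).const_mul _
    refine Integrable.mono' hdom ?_ ?_
    · refine AEStronglyMeasurable.mul ?_ (AEStronglyMeasurable.add ?_ aestronglyMeasurable_const)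
      · simpa [Real.norm_eq_abs] using (hf.sub hg).norm
      · simpa [Real.norm_eq_abs] using hx'int.1.norm
    · refine (ae_restrict_iff' measurableSet_Ioc).2 (ae_of_all _ fun t ht => ?_)
      have h1 : |f t - g t| ≤ 2 * B := by
        calc |f t - g t| ≤ |f t| + |g t| := abs_sub _ _
          _ ≤ 2 * B := by linarith [hfB t ht, hgB t ht]
      have h2 : (0:ℝ) ≤ |x' t| + 2 * M * Real.exp B := by positivity
      rw [Real.norm_eq_abs, abs_of_nonneg (mul_nonneg (abs_nonneg _) h2)]
      exact mul_le_mul_of_nonneg_right h1 h2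
  exact setIntegral_mono_on hint1 hint2 measurableSet_Ioc hpt

/-- Key approximation: any bounded measurable perturbation can be approximated
in `Frate` value by a `C¹` function. -/
lemma exists_contDiff_Frate_close (T M : ℝ) (hT : 0 < T) (hM : 0 < M)
    (x' wp wm : ℝ → ℝ) (hx'meas : Measurable x')
    (hx'int : IntegrableOn x' (Set.Ioc 0 T))
    (hwpmeas : Measurable wp) (hwmmeas : Measurable wm)
    (hwp : ∀ t, wp t ∈ Set.Icc (0:ℝ) M) (hwm : ∀ t, wm t ∈ Set.Icc (0:ℝ) M)
    (a : ℝ → ℝ) (ha : Measurable a) (K : ℝ) (hK : ∀ t, |a t| ≤ K)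
    {ε : ℝ} (hε : 0 < ε) :
    ∃ g : ℝ → ℝ, ContDiff ℝ 1 g ∧
      |Frate T x' wp wm a - Frate T x' wp wm g| ≤ ε := by
  have hK0 : (0:ℝ) ≤ K := le_trans (abs_nonneg _) (hK 0)
  set B : ℝ := K + 1 with hBdef
  set C : ℝ := 2 * M * Real.exp B with hCdef
  have hC0 : 0 < C := by positivity
  set W : ℝ → ℝ := fun t => |x' t| + C with hWdef
  have hWmeas : Measurable W := hx'meas.abs.add measurable_const
  have hWnn : ∀ t, 0 ≤ W t := fun t => by positivity
  have hfin : volume (Set.Ioc (0:ℝ) T) < ⊤ := by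
    rw [Real.volume_Ioc]; exact ENNReal.ofReal_lt_top
  have hWint : IntegrableOn W (Set.Ioc 0 T) :=
    hx'int.abs.add (integrableOn_const hfin.ne)
  set ν : Measure ℝ := volume.restrict (Set.Ioc 0 T) with hνdef
  set w : ℝ → NNReal := fun t => (W t).toNNReal with hwdef
  have hwmeas' : Measurable w := hWmeas.real_toNNReal
  set μ : Measure ℝ := ν.withDensity (fun t => (w t : ENNReal)) with hμdef
  haveI : IsFiniteMeasure μ := by
    exact isFiniteMeasure_withDensity_ofReal (μ := ν) (f := W) hWint.2
  -- integral wrt μ equals weighted integral wrt ν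
  have hμint : ∀ h : ℝ → ℝ, ∫ t, h t ∂μ = ∫ t, h t * W t ∂ν := by
    intro h
    rw [hμdef, integral_withDensity_eq_integral_smul hwmeas' h]
    refine integral_congr_ae (ae_of_all _ fun t => ?_)
    simp [hwdef, NNReal.smul_def, Real.coe_toNNReal _ (hWnn t), mul_comm]
  have ha_int : Integrable a μ := by
    refine Integrable.mono' (integrable_const K) ha.aestronglyMeasurable
      (ae_of_all _ fun t => ?_)
    simpa [Real.norm_eq_abs] using hK t
  obtain ⟨g0, hg0close, hg0int⟩ :=
    ha_int.exists_boundedContinuous_integral_sub_le (half_pos hε)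
  -- truncate g0 to [-K, K]
  set g1 : ℝ → ℝ := fun t => max (-K) (min (g0 t) K) with hg1def
  have hg1cont : Continuous g1 := continuous_const.max (g0.continuous.min continuous_const)
  have hg1K : ∀ t, |g1 t| ≤ K := by
    intro t
    rw [abs_le]
    refine ⟨le_max_left _ _, max_le (by linarith) (min_le_right _ _)⟩
  have hg1close : ∀ t, |a t - g1 t| ≤ |a t - g0 t| := by
    intro t
    have hat : a t = max (-K) (min (a t) K) := by
      rw [min_eq_left (abs_le.1 (hK t)).2, max_eq_right (abs_le.1 (hK t)).1]
    have key := clamp_lipschitz K (a t) (g0 t)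
    rw [← hat] at key
    exact key
  -- step A : |F a - F g1| ≤ ε/2
  have hg1int : Integrable g1 μ := by
    refine Integrable.mono' (integrable_const K) hg1cont.aestronglyMeasurable
      (ae_of_all _ fun t => ?_)
    simpa [Real.norm_eq_abs] using hg1K t
  have hA : ∫ t in Set.Ioc 0 T, |a t - g1 t| * W t ≤ ε / 2 := by
    have h1 : ∫ t in Set.Ioc 0 T, |a t - g1 t| * W t = ∫ t, |a t - g1 t| ∂μ := by
      rw [hμint fun t => |a t - g1 t|]
    rw [h1]
    have h2 : ∫ t, |a t - g1 t| ∂μ ≤ ∫ t, |a t - g0 t| ∂μ := by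
      refine integral_mono (ha_int.sub hg1int).abs (ha_int.sub hg0int).abs
        fun t => hg1close t
    refine h2.trans ?_
    simpa [Real.norm_eq_abs] using hg0close
  have haB : ∀ t ∈ Set.Ioc 0 T, |a t| ≤ B := fun t _ => (hK t).trans (by linarith)
  have hg1B : ∀ t ∈ Set.Ioc 0 T, |g1 t| ≤ B := fun t _ => (hg1K t).trans (by linarith)
  have hFA : |Frate T x' wp wm a - Frate T x' wp wm g1| ≤ ε / 2 := by
    refine (Frate_diff_bound T M B hM (by positivity) x' wp wm a g1 hx'int hwpmeas hwmmeas
      hwp hwm ha.aestronglyMeasurable hg1cont.aestronglyMeasurable haB hg1B).trans ?_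
    exact hA
  -- step B : polynomial approximation of g1
  set Cint : ℝ := ∫ t in Set.Ioc 0 T, W t with hCintdef
  have hCint0 : 0 ≤ Cint := setIntegral_nonneg measurableSet_Ioc fun t _ => hWnn t
  set δ : ℝ := min 1 (ε / (2 * (Cint + 1))) with hδdef
  have hδpos : 0 < δ := lt_min one_pos (by positivity)
  obtain ⟨p, hp⟩ := exists_polynomial_near_of_continuousOn 0 T g1 hg1cont.continuousOn δ hδpos
  have hpB : ∀ t ∈ Set.Ioc 0 T, |Polynomial.eval t p| ≤ B := by
    intro t ht
    have ht' : t ∈ Set.Icc 0 T := Set.Ioc_subset_Icc_self ht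
    have := hp t ht'
    have h1 : |Polynomial.eval t p| ≤ |Polynomial.eval t p - g1 t| + |g1 t| := by
      calc |Polynomial.eval t p| = |(Polynomial.eval t p - g1 t) + g1 t| := by ring_nf
        _ ≤ |Polynomial.eval t p - g1 t| + |g1 t| := abs_add_le _ _
    have hδ1 : δ ≤ 1 := min_le_left _ _
    linarith [hg1K t]
  have hFB : |Frate T x' wp wm g1 - Frate T x' wp wm (fun t => Polynomial.eval t p)| ≤ ε / 2 := by
    refine (Frate_diff_bound T M B hM (by positivity) x' wp wm g1
      (fun t => Polynomial.eval t p) hx'int hwpmeas hwmmeas hwp hwm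
      hg1cont.aestronglyMeasurable p.continuous.aestronglyMeasurable hg1B hpB).trans ?_
    have hmono : ∫ t in Set.Ioc 0 T, |g1 t - Polynomial.eval t p| * W t
        ≤ ∫ t in Set.Ioc 0 T, δ * W t := by
      refine setIntegral_mono_on ?_ (hWint.const_mul δ) measurableSet_Ioc ?_
      · refine Integrable.mono' (hWint.const_mul δ) ?_ ?_
        · refine AEStronglyMeasurable.mul ?_ hWmeas.aestronglyMeasurable
          simpa [Real.norm_eq_abs] using
            ((hg1cont.sub p.continuous).aestronglyMeasurable
              (μ := volume.restrict (Set.Ioc 0 T))).norm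
        · refine (ae_restrict_iff' measurableSet_Ioc).2 (ae_of_all _ fun t ht => ?_)
          have h1 : |g1 t - Polynomial.eval t p| ≤ δ := by
            have := hp t (Set.Ioc_subset_Icc_self ht)
            rw [abs_sub_comm]; exact this.le
          rw [Real.norm_eq_abs, abs_of_nonneg (mul_nonneg (abs_nonneg _) (hWnn t))]
          exact mul_le_mul_of_nonneg_right h1 (hWnn t)
      · intro t ht
        have h1 : |g1 t - Polynomial.eval t p| ≤ δ := by
          have := hp t (Set.Ioc_subset_Icc_self ht)
          rw [abs_sub_comm]; exact this.le
        exact mul_le_mul_of_nonneg_right h1 (hWnn t)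
    refine hmono.trans ?_
    rw [integral_const_mul]
    have hδ2 : δ ≤ ε / (2 * (Cint + 1)) := min_le_right _ _
    calc δ * Cint ≤ (ε / (2 * (Cint + 1))) * Cint :=
          mul_le_mul_of_nonneg_right hδ2 hCint0
      _ ≤ ε / 2 := by
          rw [div_mul_eq_mul_div, div_le_div_iff₀ (by positivity) (by positivity)]
          nlinarith
  refine ⟨fun t => Polynomial.eval t p, ?_, ?_⟩
  · simpa using contDiff_one_polynomial p
  · calc |Frate T x' wp wm a - Frate T x' wp wm (fun t => Polynomial.eval t p)|
        ≤ |Frate T x' wp wm a - Frate T x' wp wm g1|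
          + |Frate T x' wp wm g1 - Frate T x' wp wm (fun t => Polynomial.eval t p)| := by
          have := abs_sub_le (Frate T x' wp wm a) (Frate T x' wp wm g1)
            (Frate T x' wp wm (fun t => Polynomial.eval t p))
          exact this
      _ ≤ ε / 2 + ε / 2 := add_le_add hFA hFB
      _ = ε := by ring

/-- The supremum over `C¹` perturbations equals the supremum
over bounded measurable perturbations in the random-walk rate function. -/
theorem sup_C1_eq_sup_bounded_measurable (T M : ℝ) (hT : 0 < T) (hM : 0 < M)
    (x x' : ℝ → ℝ) (hx'meas : Measurable x') (hx'int : IntegrableOn x' (Set.Ioc 0 T))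
    (hAC : ∀ t ∈ Set.Icc 0 T, x t = x 0 + ∫ s in (0 : ℝ)..t, x' s)
    (wp wm : ℝ → ℝ) (hwpmeas : Measurable wp) (hwmmeas : Measurable wm)
    (hwp : ∀ t, wp t ∈ Set.Icc (0 : ℝ) M) (hwm : ∀ t, wm t ∈ Set.Icc (0 : ℝ) M) :
    sSup {v : EReal | ∃ a : ℝ → ℝ, ContDiff ℝ 1 a ∧
        v = ((Frate T x' wp wm a : ℝ) : EReal)} =
      sSup {v : EReal | ∃ a : ℝ → ℝ, Measurable a ∧ (∃ K : ℝ, ∀ t, |a t| ≤ K) ∧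
        v = ((Frate T x' wp wm a : ℝ) : EReal)} := by
  apply le_antisymm
  · -- C¹ ⊆ bounded measurable (after modifying outside [0,T])
    refine sSup_le_sSup ?_
    rintro v ⟨a, haC, rfl⟩
    set b : ℝ → ℝ := fun t => a (min (max t 0) T) with hbdef
    have hbcont : Continuous b :=
      haC.continuous.comp ((continuous_id.max continuous_const).min continuous_const)
    have hmem : ∀ t : ℝ, min (max t 0) T ∈ Set.Icc 0 T := by
      intro t
      exact ⟨le_min (le_max_right t 0) hT.le, min_le_right _ _⟩
    obtain ⟨C, hC⟩ := isCompact_Icc.exists_bound_of_continuousOn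
      (s := Set.Icc (0:ℝ) T) haC.continuous.continuousOn
    have hbeq : ∀ t ∈ Set.Ioc 0 T, b t = a t := by
      intro t ht
      show a (min (max t 0) T) = a t
      rw [max_eq_left ht.1.le, min_eq_left ht.2]
    refine ⟨b, hbcont.measurable, ⟨C, fun t => ?_⟩, ?_⟩
    · simpa [Real.norm_eq_abs] using hC _ (hmem t)
    · congr 1
      rw [Frate, Frate]
      refine setIntegral_congr_fun measurableSet_Ioc fun t ht => ?_
      rw [hbeq t ht]
  · -- bounded measurable ≤ sup over C¹
    refine sSup_le ?_
    rintro v ⟨a, hameas, ⟨K, hK⟩, rfl⟩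
    refine le_of_forall_lt fun c hc => ?_
    obtain ⟨z, hz1, hz2⟩ := EReal.exists_between_coe_real hc
    have hzlt : z < Frate T x' wp wm a := EReal.coe_lt_coe_iff.1 hz2
    obtain ⟨g, hgC, hgclose⟩ := exists_contDiff_Frate_close T M hT hM x' wp wm hx'meas
      hx'int hwpmeas hwmmeas hwp hwm a hameas K hK (ε := Frate T x' wp wm a - z)
      (by linarith)
    have hzg : z ≤ Frate T x' wp wm g := by
      have := abs_le.1 hgclose
      linarith [this.2]
    calc c < (z : EReal) := hz1
      _ ≤ ((Frate T x' wp wm g : ℝ) : EReal) := EReal.coe_le_coe_iff.2 hzg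
      _ ≤ sSup {v : EReal | ∃ a : ℝ → ℝ, ContDiff ℝ 1 a ∧
          v = ((Frate T x' wp wm a : ℝ) : EReal)} := le_sSup ⟨g, hgC, rfl⟩

end
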